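/- Let Φ(z, θ) = (ρ(θ;z)cos θ, ρ(θ;z)sin θ) with ρ : ℝ^P × ℝ → ℝ C¹ (here z ∈ ℝ^P). Then the Jacobian J_Φ = √(det(DΦᵀ·DΦ)) of Φ : ℝ^{P+1} → ℝ² equals ρ·|∇_z ρ|, where |∇_z ρ|² = Σ_{p=1}^P (∂_{z_p} ρ)². -/
import Mathlib


open Real

/-- The coarea Jacobian of `Φ(z,θ) = (ρ(θ;z)cos θ, ρ(θ;z)sin θ)`, i.e. the square root
of the 2×2 Gram determinant of the rows of `DΦ`, equals `ρ·|∇_z ρ|`. -/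
theorem stmt_7 (P : ℕ) (ρ : ℝ → (Fin P → ℝ) → ℝ)
    (hρ : ContDiff ℝ 1 (fun p : ℝ × (Fin P → ℝ) => ρ p.1 p.2))
    (hpos : ∀ θ z, 0 < ρ θ z) (θ : ℝ) (z : Fin P → ℝ)
    (gz : Fin P → ℝ) (hgz : ∀ p, gz p = fderiv ℝ (fun z' => ρ θ z') z (Pi.single p 1))
    (pθ : ℝ) (hpθ : pθ = deriv (fun θ' => ρ θ' z) θ)
    (row1 : Fin P → ℝ) (hrow1 : ∀ p, row1 p = gz p * Real.cos θ)
    (row2 : Fin P → ℝ) (hrow2 : ∀ p, row2 p = gz p * Real.sin θ)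
    (e1 e2 : ℝ)
    (he1 : e1 = pθ * Real.cos θ - ρ θ z * Real.sin θ)
    (he2 : e2 = pθ * Real.sin θ + ρ θ z * Real.cos θ) :
    Real.sqrt (((∑ p, row1 p ^ 2) + e1 ^ 2) * ((∑ p, row2 p ^ 2) + e2 ^ 2) -
        ((∑ p, row1 p * row2 p) + e1 * e2) ^ 2) =
      ρ θ z * Real.sqrt (∑ p, gz p ^ 2) := by
  set G := ∑ p, gz p ^ 2 with hG
  have h1 : ∑ p, row1 p ^ 2 = G * Real.cos θ ^ 2 := by
    rw [hG, Finset.sum_mul]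
    exact Finset.sum_congr rfl fun p _ => by rw [hrow1]; ring
  have h2 : ∑ p, row2 p ^ 2 = G * Real.sin θ ^ 2 := by
    rw [hG, Finset.sum_mul]
    exact Finset.sum_congr rfl fun p _ => by rw [hrow2]; ring
  have h3 : ∑ p, row1 p * row2 p = G * (Real.cos θ * Real.sin θ) := by
    rw [hG, Finset.sum_mul]
    exact Finset.sum_congr rfl fun p _ => by rw [hrow1, hrow2]; ring
  have hpyth := Real.sin_sq_add_cos_sq θ
  have key : (G * Real.cos θ ^ 2 + e1 ^ 2) * (G * Real.sin θ ^ 2 + e2 ^ 2) -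
      (G * (Real.cos θ * Real.sin θ) + e1 * e2) ^ 2 = ρ θ z ^ 2 * G := by
    subst he1 he2
    linear_combination (G * ρ θ z ^ 2 * (Real.sin θ ^ 2 + Real.cos θ ^ 2 + 1)) * hpyth
  rw [h1, h2, h3, key, Real.sqrt_mul (sq_nonneg _), Real.sqrt_sq (hpos θ z).le]
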